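/- For every m ≥ 2, there is a scheduling game on m identical machines — one job of weight m and m(m−1) unit-weight jobs, with priority lists placing the heavy job last — in which every pure Nash equilibrium has makespan 2m−1, while the optimal makespan is m; hence the price of stability with respect to makespan is exactly 2 − 1/m. -/

import Mathlib

def schedCost {n m : ℕ} (w : Fin n → ℝ) (c : Fin m → ℝ) (π : Fin m → Fin n → Fin n)
    (s : Fin n → Fin m) (i : Fin n) : ℝ :=
  c (s i) * ∑ i' ∈ Finset.univ.filter (fun i' => s i' = s i ∧ π (s i) i' ≤ π (s i) i), w i'

def schedNE {n m : ℕ} (w : Fin n → ℝ) (c : Fin m → ℝ) (π : Fin m → Fin n → Fin n)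
    (s : Fin n → Fin m) : Prop :=
  ∀ i j, schedCost w c π s i ≤ schedCost w c π (Function.update s i j) i

noncomputable def makespan {n m : ℕ} (w : Fin n → ℝ) (c : Fin m → ℝ) (π : Fin m → Fin n → Fin n)
    (s : Fin n → Fin m) : ℝ :=
  ⨆ i, schedCost w c π s i

namespace Stmt11Aux

/-- unit jobs on machine j -/
abbrev wt (m N : ℕ) : Fin (N+1) → ℝ := fun i => if i = 0 then (m:ℝ) else 1
abbrev cc (m : ℕ) : Fin m → ℝ := fun _ => (1:ℝ)

def U {N m : ℕ} (s : Fin (N+1) → Fin m) (j : Fin m) : Finset (Fin (N+1)) :=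
  Finset.univ.filter fun i => i ≠ 0 ∧ s i = j

section Cost

variable {N m : ℕ} (π : Fin m → Fin (N+1) → Fin (N+1))
  (hlast : ∀ j i, i ≠ 0 → π j i < π j 0)



lemma sum_wt {F : Finset (Fin (N+1))} (h0 : (0 : Fin (N+1)) ∉ F) :
    ∑ i ∈ F, (if i = 0 then (m:ℝ) else 1) = F.card := by
  rw [Finset.sum_congr rfl (fun i hi => if_neg (by rintro rfl; exact h0 hi))]
  simp

include hlast in
lemma cost_unit_eq (s : Fin (N+1) → Fin m) (i : Fin (N+1)) (hi : i ≠ 0) :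
    schedCost (wt m N) (cc m) π s i
      = ((Finset.univ.filter fun i' => s i' = s i ∧ π (s i) i' ≤ π (s i) i).card : ℝ) := by
  rw [schedCost, one_mul]
  apply sum_wt
  intro h0
  have := (Finset.mem_filter.1 h0).2.2
  exact absurd this (not_le.2 (hlast (s i) i hi))

include hlast in
lemma cost_unit_le (s : Fin (N+1) → Fin m) (i : Fin (N+1)) (hi : i ≠ 0) :
    schedCost (wt m N) (cc m) π s i ≤ ((U s (s i)).card : ℝ) := by
  rw [cost_unit_eq π hlast s i hi]
  have hsub : (Finset.univ.filter fun i' => s i' = s i ∧ π (s i) i' ≤ π (s i) i) ⊆ U s (s i) := by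
    intro i' h
    rw [Finset.mem_filter] at h
    refine Finset.mem_filter.2 ⟨Finset.mem_univ _, ?_, h.2.1⟩
    rintro rfl
    exact absurd h.2.2 (not_le.2 (hlast (s i) i hi))
  exact_mod_cast Finset.card_le_card hsub

include hlast in
lemma cost_heavy_eq (s : Fin (N+1) → Fin m) :
    schedCost (wt m N) (cc m) π s 0 = m + ((U s (s 0)).card : ℝ) := by
  rw [schedCost, one_mul]
  have hset : (Finset.univ.filter fun i' => s i' = s 0 ∧ π (s 0) i' ≤ π (s 0) 0)
      = insert 0 (U s (s 0)) := by
    ext i'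
    simp only [Finset.mem_filter, Finset.mem_univ, true_and, Finset.mem_insert, U]
    constructor
    · rintro ⟨h1, _⟩
      by_cases h : i' = 0
      · exact Or.inl h
      · exact Or.inr ⟨h, h1⟩
    · rintro (rfl | ⟨h, h1⟩)
      · exact ⟨rfl, le_refl _⟩
      · exact ⟨h1, (hlast (s 0) i' h).le⟩
  rw [hset, Finset.sum_insert (by simp [U]), sum_wt (by simp [U])]
  simp [wt]

lemma U_update_zero (s : Fin (N+1) → Fin m) (j j' : Fin m) :
    U (Function.update s 0 j) j' = U s j' := by
  ext i
  simp only [U, Finset.mem_filter, Finset.mem_univ, true_and]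
  constructor
  · rintro ⟨h0, h1⟩
    rw [Function.update_of_ne h0] at h1
    exact ⟨h0, h1⟩
  · rintro ⟨h0, h1⟩
    exact ⟨h0, by rwa [Function.update_of_ne h0]⟩

lemma le_makespan (s : Fin (N+1) → Fin m) (i : Fin (N+1)) :
    schedCost (wt m N) (cc m) π s i ≤ makespan (wt m N) (cc m) π s := by
  rw [makespan]
  exact le_ciSup (Set.Finite.bddAbove (Set.finite_range _)) i

end Cost
section Greedy

variable {N m : ℕ} (π : Fin m → Fin (N+1) → Fin (N+1)) (hm0 : 0 < m)

def mach (hm0 : 0 < m) (t : ℕ) : Fin m := ⟨t % m, Nat.mod_lt _ hm0⟩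

noncomputable def sel (f : Fin (N+1) → Fin (N+1)) (R : Finset (Fin (N+1))) : Fin (N+1) :=
  if h : R.Nonempty then (Finset.exists_min_image R f h).choose else 0

lemma sel_mem {f : Fin (N+1) → Fin (N+1)} {R : Finset (Fin (N+1))} (h : R.Nonempty) :
    sel f R ∈ R := by
  rw [sel, dif_pos h]
  exact (Finset.exists_min_image R f h).choose_spec.1

lemma sel_min {f : Fin (N+1) → Fin (N+1)} {R : Finset (Fin (N+1))} (h : R.Nonempty)
    {i : Fin (N+1)} (hi : i ∈ R) : f (sel f R) ≤ f i := by
  rw [sel, dif_pos h]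
  exact (Finset.exists_min_image R f h).choose_spec.2 i hi

noncomputable def st (π : Fin m → Fin (N+1) → Fin (N+1)) (hm0 : 0 < m) : ℕ → Finset (Fin (N+1))
  | 0 => Finset.univ.erase 0
  | t+1 => (st π hm0 t).erase (sel (π (mach hm0 t)) (st π hm0 t))

noncomputable def pick (t : ℕ) : Fin (N+1) := sel (π (mach hm0 t)) (st π hm0 t)

lemma st_succ_subset (t : ℕ) : st π hm0 (t+1) ⊆ st π hm0 t := Finset.erase_subset _ _

lemma st_mono {t t' : ℕ} (h : t ≤ t') : st π hm0 t' ⊆ st π hm0 t := by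
  induction t' with
  | zero => cases Nat.le_zero.1 h; exact fun x hx => hx
  | succ k ih =>
    rcases Nat.lt_or_ge t (k+1) with h1 | h1
    · exact (st_succ_subset π hm0 k).trans (ih (Nat.lt_succ_iff.1 h1))
    · cases le_antisymm h h1; exact fun x hx => hx

lemma st_card {t : ℕ} (h : t ≤ N) : (st π hm0 t).card = N - t := by
  induction t with
  | zero => simp [st]
  | succ k ih =>
    have hk : k < N := h
    have hne : (st π hm0 k).Nonempty := by
      rw [← Finset.card_pos, ih hk.le]
      omega
    rw [st, Finset.card_erase_of_mem (sel_mem hne), ih hk.le]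
    omega

lemma st_nonempty {t : ℕ} (h : t < N) : (st π hm0 t).Nonempty := by
  rw [← Finset.card_pos, st_card π hm0 h.le]
  omega

lemma pick_mem {t : ℕ} (h : t < N) : pick π hm0 t ∈ st π hm0 t :=
  sel_mem (st_nonempty π hm0 h)

lemma pick_min {t : ℕ} (h : t < N) {i : Fin (N+1)} (hi : i ∈ st π hm0 t) :
    π (mach hm0 t) (pick π hm0 t) ≤ π (mach hm0 t) i :=
  sel_min (st_nonempty π hm0 h) hi

lemma pick_ne_zero {t : ℕ} (h : t < N) : pick π hm0 t ≠ 0 := by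
  have := st_mono π hm0 (Nat.zero_le t) (pick_mem π hm0 h)
  rw [st] at this
  exact (Finset.mem_erase.1 this).1

lemma pick_not_mem_succ (t : ℕ) : pick π hm0 t ∉ st π hm0 (t+1) := by
  rw [st]
  exact Finset.notMem_erase _ _

lemma pick_injOn {t t' : ℕ} (h : t < N) (h' : t' < N) (heq : pick π hm0 t = pick π hm0 t') :
    t = t' := by
  by_contra hne
  rcases Nat.lt_or_ge t t' with hlt | hge
  · exact pick_not_mem_succ π hm0 t
      (st_mono π hm0 hlt (heq ▸ pick_mem π hm0 h'))
  · have hlt : t' < t := lt_of_le_of_ne hge (Ne.symm hne)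
    exact pick_not_mem_succ π hm0 t'
      (st_mono π hm0 hlt (heq ▸ pick_mem π hm0 h))

lemma pick_surj {i : Fin (N+1)} (hi : i ≠ 0) : ∃ t, t < N ∧ pick π hm0 t = i := by
  by_contra hc
  push_neg at hc
  have key : ∀ t, t ≤ N → i ∈ st π hm0 t := by
    intro t
    induction t with
    | zero => intro _; rw [st]; exact Finset.mem_erase.2 ⟨hi, Finset.mem_univ _⟩
    | succ k ih =>
      intro hk
      have hik := ih (Nat.le_of_succ_le hk)
      rw [st]
      exact Finset.mem_erase.2 ⟨fun h => (hc k hk h.symm).elim, hik⟩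
  have hmem := key N le_rfl
  have h2 : (st π hm0 N).card = 0 := by rw [st_card π hm0 le_rfl]; omega
  rw [Finset.card_eq_zero] at h2
  rw [h2] at hmem
  exact absurd hmem (Finset.notMem_empty i)

noncomputable def Tof (i : Fin (N+1)) : ℕ :=
  if h : ∃ t, t < N ∧ pick π hm0 t = i then h.choose else 0

lemma Tof_spec {i : Fin (N+1)} (hi : i ≠ 0) :
    Tof π hm0 i < N ∧ pick π hm0 (Tof π hm0 i) = i := by
  rw [Tof, dif_pos (pick_surj π hm0 hi)]
  exact (pick_surj π hm0 hi).choose_spec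

lemma Tof_pick {t : ℕ} (h : t < N) : Tof π hm0 (pick π hm0 t) = t := by
  have h1 := Tof_spec π hm0 (pick_ne_zero π hm0 h)
  exact pick_injOn π hm0 h1.1 h h1.2

noncomputable def sNE : Fin (N+1) → Fin m :=
  fun i => if i = 0 then (⟨0, hm0⟩ : Fin m) else mach hm0 (Tof π hm0 i)

lemma sNE_pick {t : ℕ} (h : t < N) : sNE π hm0 (pick π hm0 t) = mach hm0 t := by
  rw [sNE, if_neg (pick_ne_zero π hm0 h), Tof_pick π hm0 h]

lemma sNE_unit {i : Fin (N+1)} (hi : i ≠ 0) : sNE π hm0 i = mach hm0 (Tof π hm0 i) := by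
  rw [sNE, if_neg hi]

end Greedy
section GreedyNE

variable {m : ℕ} (π : Fin m → Fin (m*(m-1)+1) → Fin (m*(m-1)+1)) (hm0 : 0 < m)

lemma mach_mul_add (j : Fin m) (r : ℕ) : mach hm0 (r * m + j.val) = j := by
  apply Fin.ext
  show (r * m + j.val) % m = j.val
  rw [mul_comm, Nat.mul_add_mod, Nat.mod_eq_of_lt j.isLt]

lemma time_lt {r : ℕ} (hr : r < m - 1) (j : Fin m) : r * m + j.val < m * (m-1) := by
  calc r * m + j.val < r * m + m := by omega
    _ = (r+1) * m := by ring
    _ ≤ (m-1) * m := Nat.mul_le_mul_right m (by omega)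
    _ = m * (m-1) := mul_comm _ _

lemma card_U_sNE (j : Fin m) : (U (sNE π hm0) j).card = m - 1 := by
  apply le_antisymm
  · have h := Finset.card_le_card_of_injOn (s := U (sNE π hm0) j)
      (fun i => Tof π hm0 i / m) (t := Finset.range (m-1)) ?_ ?_
    · simpa using h
    · intro i hi
      rw [U, Finset.mem_coe, Finset.mem_filter] at hi
      obtain ⟨-, hi0, hij⟩ := hi
      have ht := Tof_spec π hm0 hi0
      rw [Finset.mem_coe, Finset.mem_range]
      show Tof π hm0 i / m < m - 1
      rw [Nat.div_lt_iff_lt_mul hm0]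
      calc Tof π hm0 i < m * (m-1) := ht.1
        _ = (m-1) * m := mul_comm _ _
    · intro i1 h1 i2 h2 heq
      simp only [Finset.coe_filter, Set.mem_setOf_eq, U, Finset.mem_coe,
        Finset.mem_filter] at h1 h2
      obtain ⟨-, h10, h1j⟩ := h1
      obtain ⟨-, h20, h2j⟩ := h2
      have ht1 := Tof_spec π hm0 h10
      have ht2 := Tof_spec π hm0 h20
      have hm1 : Tof π hm0 i1 % m = j.val := by
        have := (sNE_unit π hm0 h10).symm.trans h1j
        exact congrArg Fin.val this
      have hm2 : Tof π hm0 i2 % m = j.val := by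
        have := (sNE_unit π hm0 h20).symm.trans h2j
        exact congrArg Fin.val this
      have hT : Tof π hm0 i1 = Tof π hm0 i2 := by
        have e1 := Nat.div_add_mod (Tof π hm0 i1) m
        have e2 := Nat.div_add_mod (Tof π hm0 i2) m
        have heq' : Tof π hm0 i1 / m = Tof π hm0 i2 / m := heq
        conv_lhs => rw [← e1]
        conv_rhs => rw [← e2]
        rw [heq', hm1, hm2]
      rw [← ht1.2, ← ht2.2, hT]
  · have h := Finset.card_le_card_of_injOn (fun r => pick π hm0 (r * m + j.val))
      (s := Finset.range (m-1)) (t := U (sNE π hm0) j) ?_ ?_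
    · simpa using h
    · intro r hr
      rw [Finset.mem_coe, Finset.mem_range] at hr
      have htime := time_lt hr j
      rw [Finset.mem_coe, U, Finset.mem_filter]
      exact ⟨Finset.mem_univ _, pick_ne_zero π hm0 htime,
        by rw [sNE_pick π hm0 htime, mach_mul_add]⟩
    · intro r1 h1 r2 h2 heq
      rw [Finset.coe_range, Set.mem_Iio] at h1 h2
      have := pick_injOn π hm0 (time_lt h1 j) (time_lt h2 j) heq
      have : r1 * m = r2 * m := by omega
      exact Nat.eq_of_mul_eq_mul_right hm0 this

variable (hπ : ∀ j, Function.Bijective (π j))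
  (hlast : ∀ (j : Fin m) i, i ≠ 0 → π j i < π j 0)

include hπ hlast in
theorem greedy_NE : schedNE (wt m (m*(m-1))) (cc m) π (sNE π hm0) := by
  intro i j
  by_cases hi : i = 0
  · subst hi
    rw [cost_heavy_eq π hlast, cost_heavy_eq π hlast]
    have : Function.update (sNE π hm0) 0 j 0 = j := Function.update_self _ _ _
    rw [this, U_update_zero, card_U_sNE, card_U_sNE]
  · by_cases hj : j = sNE π hm0 i
    · rw [hj, Function.update_eq_self]
    · set s := sNE π hm0 with hs
      obtain ⟨t, htdef⟩ : ∃ t, Tof π hm0 i = t := ⟨_, rfl⟩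
      obtain ⟨htN, hpick⟩ := Tof_spec π hm0 hi
      rw [htdef] at htN hpick
      have hsi : s i = mach hm0 t := by rw [← htdef]; exact sNE_unit π hm0 hi
      set s' := Function.update s i j with hs'
      have hs'i : s' i = j := Function.update_self _ _ _
      rw [cost_unit_eq π hlast s i hi, cost_unit_eq π hlast s' i hi]
      have hOld : (Finset.univ.filter
          fun i' => s i' = s i ∧ π (s i) i' ≤ π (s i) i).card ≤ t / m + 1 := by
        have h := Finset.card_le_card_of_injOn
          (s := Finset.univ.filter fun i' => s i' = s i ∧ π (s i) i' ≤ π (s i) i)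
          (fun i' => Tof π hm0 i' / m)
          (t := Finset.range (t/m + 1)) ?_ ?_
        · simpa using h
        · intro i' hi'
          rw [Finset.mem_coe, Finset.mem_filter] at hi'
          obtain ⟨-, hsame, hle⟩ := hi'
          have hi'0 : i' ≠ 0 := by
            rintro rfl
            exact absurd hle (not_le.2 (hlast (s i) i hi))
          obtain ⟨ht'N, hpick'⟩ := Tof_spec π hm0 hi'0
          have ht'le : Tof π hm0 i' ≤ t := by
            by_contra hgt
            push_neg at hgt
            have hmem : i' ∈ st π hm0 t := by
              rw [← hpick']
              exact st_mono π hm0 hgt.le (pick_mem π hm0 ht'N)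
            have hmin : π (s i) i ≤ π (s i) i' := by
              rw [hsi, ← hpick]
              exact pick_min π hm0 htN hmem
            have hππ : π (s i) i' = π (s i) i := le_antisymm hle hmin
            have hieq : i' = i := (hπ (s i)).injective hππ
            rw [hieq, htdef] at hgt
            omega
          have hmr : (fun i' => Tof π hm0 i' / m) i' = Tof π hm0 i' / m := rfl
          rw [Finset.mem_coe, Finset.mem_range, hmr]
          have := Nat.div_le_div_right (c := m) ht'le
          omega
        · intro i1 h1 i2 h2 heq
          simp only [Finset.coe_filter, Set.mem_setOf_eq, Finset.mem_univ,
            true_and] at h1 h2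
          have h10 : i1 ≠ 0 := by
            rintro rfl
            exact absurd h1.2 (not_le.2 (hlast (s i) i hi))
          have h20 : i2 ≠ 0 := by
            rintro rfl
            exact absurd h2.2 (not_le.2 (hlast (s i) i hi))
          have ht1 := Tof_spec π hm0 h10
          have ht2 := Tof_spec π hm0 h20
          have hm1 : Tof π hm0 i1 % m = t % m := by
            have e := (sNE_unit π hm0 h10).symm.trans (h1.1.trans hsi)
            exact congrArg Fin.val e
          have hm2 : Tof π hm0 i2 % m = t % m := by
            have e := (sNE_unit π hm0 h20).symm.trans (h2.1.trans hsi)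
            exact congrArg Fin.val e
          have hT : Tof π hm0 i1 = Tof π hm0 i2 := by
            have e1 := Nat.div_add_mod (Tof π hm0 i1) m
            have e2 := Nat.div_add_mod (Tof π hm0 i2) m
            have heq' : Tof π hm0 i1 / m = Tof π hm0 i2 / m := heq
            conv_lhs => rw [← e1]
            conv_rhs => rw [← e2]
            rw [heq', hm1, hm2]
          rw [← ht1.2, ← ht2.2, hT]
      have hNew : t / m + 1 ≤ (Finset.univ.filter
          fun i' => s' i' = s' i ∧ π (s' i) i' ≤ π (s' i) i).card := by
        set G : Finset (Fin (m*(m-1)+1)) :=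
          insert i ((Finset.range (t/m)).image (fun r => pick π hm0 (r * m + j.val)))
          with hG
        have htime : ∀ r, r < t/m → r * m + j.val < t := by
          intro r hr
          have h1 : (r+1) * m ≤ (t/m) * m := Nat.mul_le_mul_right m (by omega)
          have h2 : (t/m) * m ≤ t := Nat.div_mul_le_self t m
          have h3 : (r+1) * m = r * m + m := by ring
          have h4 := j.isLt
          omega
        have hGsub : G ⊆ Finset.univ.filter
            fun i' => s' i' = s' i ∧ π (s' i) i' ≤ π (s' i) i := by
          intro x hx
          rw [hG, Finset.mem_insert] at hx
          rcases hx with rfl | hx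
          · exact Finset.mem_filter.2 ⟨Finset.mem_univ _, rfl, le_refl _⟩
          · rw [Finset.mem_image] at hx
            obtain ⟨r, hr, rfl⟩ := hx
            rw [Finset.mem_range] at hr
            have hu_t := htime r hr
            have hu_N : r * m + j.val < m * (m-1) := hu_t.trans htN
            have hne : pick π hm0 (r * m + j.val) ≠ i := by
              intro he
              rw [← hpick] at he
              exact absurd (pick_injOn π hm0 hu_N htN he) (by omega)
            refine Finset.mem_filter.2 ⟨Finset.mem_univ _, ?_, ?_⟩
            · rw [hs', Function.update_of_ne hne, Function.update_self, hs,
                sNE_pick π hm0 hu_N, mach_mul_add]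
            · rw [hs'i]
              have hmemi : i ∈ st π hm0 (r * m + j.val) := by
                rw [← hpick]
                exact st_mono π hm0 hu_t.le (pick_mem π hm0 htN)
              have := pick_min π hm0 hu_N hmemi
              rwa [mach_mul_add] at this
        have hGcard : G.card = t/m + 1 := by
          rw [hG, Finset.card_insert_of_notMem, Finset.card_image_of_injOn,
            Finset.card_range]
          · intro r1 h1 r2 h2 heq
            rw [Finset.coe_range, Set.mem_Iio] at h1 h2
            have e := pick_injOn π hm0 ((htime r1 h1).trans htN)
              ((htime r2 h2).trans htN) heq
            have : r1 * m = r2 * m := by omega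
            exact Nat.eq_of_mul_eq_mul_right hm0 this
          · rw [Finset.mem_image]
            rintro ⟨r, hr, he⟩
            rw [Finset.mem_range] at hr
            rw [← hpick] at he
            have hu := htime r hr
            exact absurd (pick_injOn π hm0 (hu.trans htN) htN he) (by omega)
        calc t/m + 1 = G.card := hGcard.symm
          _ ≤ _ := Finset.card_le_card hGsub
      exact_mod_cast le_trans hOld hNew

end GreedyNE
lemma arith_a {m a : ℕ} (hm : 2 ≤ m) (h1 : m * a ≤ m * (m-1))
    (h2 : m * (m-1) ≤ a + (m-1) * (a+1)) : a = m - 1 := by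
  obtain ⟨M, rfl⟩ : ∃ M, m = M + 2 := ⟨m - 2, by omega⟩
  have e0 : M + 2 - 1 = M + 1 := by omega
  rw [e0] at h1 h2 ⊢
  have hle : a ≤ M + 1 := Nat.le_of_mul_le_mul_left h1 (by omega)
  by_contra hcon
  have haM : a ≤ M := by omega
  have e1 : (M+2) * (M+1) = M*M + 3*M + 2 := by ring
  have e2 : (M+1) * (a+1) = M*a + a + M + 1 := by ring
  have e3 : M * a ≤ M * M := Nat.mul_le_mul_left M haM
  omega

lemma arith_b {m b S : ℕ} (hm : 2 ≤ m) (hb : m - 1 < b)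
    (h1 : m * (m-1) = b + S) (h2 : (m-1) * (m-1) ≤ S) : False := by
  obtain ⟨M, rfl⟩ : ∃ M, m = M + 2 := ⟨m - 2, by omega⟩
  have e0 : M + 2 - 1 = M + 1 := by omega
  rw [e0] at h1 h2 hb
  have e1 : (M+2) * (M+1) = M*M + 3*M + 2 := by ring
  have e2 : (M+1) * (M+1) = M*M + 2*M + 1 := by ring
  omega

def topt {m : ℕ} (hm : 2 ≤ m) : Fin (m*(m-1)+1) → Fin m := fun i =>
  if i = 0 then ⟨0, by omega⟩ else ⟨1 + (i.val - 1)/m, by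
    have h1 : i.val ≤ m*(m-1) := Nat.lt_succ_iff.1 i.isLt
    have h4 : 0 < m*(m-1) := Nat.mul_pos (by omega) (by omega)
    have h2 : (i.val - 1)/m < m - 1 := by
      rw [Nat.div_lt_iff_lt_mul (by omega : 0 < m)]
      have h3 : (m-1)*m = m*(m-1) := mul_comm _ _
      omega
    omega⟩

lemma topt_ne_zero {m : ℕ} (hm : 2 ≤ m) {i : Fin (m*(m-1)+1)} (hi : i ≠ 0) :
    (topt hm i).val = 1 + (i.val - 1)/m := by
  rw [topt, if_neg hi]

lemma topt_zero {m : ℕ} (hm : 2 ≤ m) : (topt hm 0).val = 0 := by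
  rw [topt, if_pos rfl]

section Parts

variable {m : ℕ} (hm : 2 ≤ m) (π : Fin m → Fin (m*(m-1)+1) → Fin (m*(m-1)+1))
  (hπ : ∀ j, Function.Bijective (π j))
  (hlast : ∀ (j : Fin m) i, i ≠ 0 → π j i < π j 0)

include hm hlast in
lemma m_le_makespan' (t : Fin (m*(m-1)+1) → Fin m) :
    (m:ℝ) ≤ makespan (wt m (m*(m-1))) (cc m) π t := by
  have htot : ∑ i, wt m (m*(m-1)) i = (m:ℝ) + (m*(m-1) : ℕ) := by
    rw [← Finset.add_sum_erase _ _ (Finset.mem_univ (0 : Fin (m*(m-1)+1)))]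
    rw [sum_wt (Finset.notMem_erase _ _)]
    rw [Finset.card_erase_of_mem (Finset.mem_univ _), Finset.card_univ,
      Fintype.card_fin]
    simp [wt]
  have hfib : ∑ j : Fin m, ∑ i ∈ Finset.univ.filter (fun i => t i = j),
      wt m (m*(m-1)) i = ∑ i, wt m (m*(m-1)) i :=
    Finset.sum_fiberwise_of_maps_to (fun x _ => Finset.mem_univ (t x)) _
  have hpig : ∃ j : Fin m, (m:ℝ) ≤ ∑ i ∈ Finset.univ.filter (fun i => t i = j),
      wt m (m*(m-1)) i := by
    by_contra hc
    push_neg at hc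
    have hlt := Finset.sum_lt_sum_of_nonempty
      (s := (Finset.univ : Finset (Fin m))) ⟨⟨0, by omega⟩, Finset.mem_univ _⟩
      (fun j _ => hc j)
    rw [hfib, htot, Finset.sum_const, Finset.card_univ, Fintype.card_fin,
      nsmul_eq_mul] at hlt
    have hcast : ((m*(m-1) : ℕ) : ℝ) = (m:ℝ) * ((m:ℝ) - 1) := by
      push_cast [Nat.cast_sub (by omega : 1 ≤ m)]
      ring
    rw [hcast] at hlt
    nlinarith [hlt]
  obtain ⟨j, hj⟩ := hpig
  have hne : (Finset.univ.filter (fun i => t i = j)).Nonempty := by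
    rcases Finset.eq_empty_or_nonempty (Finset.univ.filter (fun i => t i = j))
      with he | h
    · rw [he, Finset.sum_empty] at hj
      have : (2:ℝ) ≤ (m:ℝ) := by exact_mod_cast hm
      linarith
    · exact h
  obtain ⟨i0, hi0, hmax⟩ := Finset.exists_max_image _ (π j) hne
  have hti0 : t i0 = j := (Finset.mem_filter.1 hi0).2
  have hcost : schedCost (wt m (m*(m-1))) (cc m) π t i0
      = ∑ i ∈ Finset.univ.filter (fun i => t i = j), wt m (m*(m-1)) i := by
    rw [schedCost, one_mul]
    congr 1
    ext i'
    simp only [Finset.mem_filter, Finset.mem_univ, true_and, hti0]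
    constructor
    · rintro ⟨h1, -⟩; exact h1
    · intro h1
      exact ⟨h1, hmax i' (Finset.mem_filter.2 ⟨Finset.mem_univ _, h1⟩)⟩
  calc (m:ℝ) ≤ schedCost (wt m (m*(m-1))) (cc m) π t i0 := by rw [hcost]; exact hj
    _ ≤ _ := le_makespan π t i0

include hm hπ hlast in
lemma NE_makespan (s : Fin (m*(m-1)+1) → Fin m)
    (hNE : schedNE (wt m (m*(m-1))) (cc m) π s) :
    makespan (wt m (m*(m-1))) (cc m) π s = 2*(m:ℝ) - 1 := by
  have hA : ∀ j, (U s (s 0)).card ≤ (U s j).card := by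
    intro j
    have h := hNE 0 j
    rw [cost_heavy_eq π hlast s, cost_heavy_eq π hlast (Function.update s 0 j)] at h
    have h0 : Function.update s 0 j 0 = j := Function.update_self _ _ _
    rw [h0, U_update_zero] at h
    have := le_of_add_le_add_left h
    exact_mod_cast this
  have hB : ∀ j, (U s j).card ≤ (U s (s 0)).card + 1 := by
    intro j
    rcases Finset.eq_empty_or_nonempty (U s j) with he | hne
    · rw [he]; simp
    · obtain ⟨i0, hi0, hmax⟩ := Finset.exists_max_image _ (π j) hne
      rw [U, Finset.mem_filter] at hi0
      obtain ⟨-, hi00, hi0j⟩ := hi0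
      have hcost : schedCost (wt m (m*(m-1))) (cc m) π s i0 = ((U s j).card : ℝ) := by
        rw [cost_unit_eq π hlast s i0 hi00]
        congr 2
        ext i'
        simp only [Finset.mem_filter, Finset.mem_univ, true_and, U, hi0j]
        constructor
        · rintro ⟨h1, h2⟩
          refine ⟨?_, h1⟩
          rintro rfl
          exact absurd h2 (not_le.2 (by rw [← hi0j] at *; exact hlast (s i0) i0 hi00))
        · rintro ⟨h1, h2⟩
          refine ⟨h2, ?_⟩
          exact hmax i' (Finset.mem_filter.2 ⟨Finset.mem_univ _, h1, h2⟩)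
      have h := hNE i0 (s 0)
      rw [hcost, cost_unit_eq π hlast _ i0 hi00] at h
      have hupd : Function.update s i0 (s 0) i0 = s 0 := Function.update_self _ _ _
      have hsub : (Finset.univ.filter fun i' =>
          Function.update s i0 (s 0) i' = Function.update s i0 (s 0) i0 ∧
          π (Function.update s i0 (s 0) i0) i' ≤ π (Function.update s i0 (s 0) i0) i0)
          ⊆ insert i0 (U s (s 0)) := by
        intro x hx
        rw [Finset.mem_filter] at hx
        obtain ⟨-, hx1, hx2⟩ := hx
        rw [hupd] at hx1 hx2
        by_cases hxi : x = i0
        · exact Finset.mem_insert.2 (Or.inl hxi)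
        · refine Finset.mem_insert.2 (Or.inr ?_)
          rw [Function.update_of_ne hxi] at hx1
          refine Finset.mem_filter.2 ⟨Finset.mem_univ _, ?_, hx1⟩
          rintro rfl
          exact absurd hx2 (not_le.2 (hlast (s 0) i0 hi00))
      have hcard := (Finset.card_le_card hsub).trans (Finset.card_insert_le _ _)
      have : ((U s j).card : ℝ) ≤ ((U s (s 0)).card + 1 : ℕ) := by
        refine h.trans ?_
        exact_mod_cast Nat.le_trans hcard (by omega)
      exact_mod_cast this
  have hsum : ∑ j : Fin m, (U s j).card = m*(m-1) := by
    have hmaps : ∀ i ∈ Finset.univ.erase (0 : Fin (m*(m-1)+1)), s i ∈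
        (Finset.univ : Finset (Fin m)) := fun i _ => Finset.mem_univ _
    have h := Finset.card_eq_sum_card_fiberwise hmaps
    rw [Finset.card_erase_of_mem (Finset.mem_univ _), Finset.card_univ,
      Fintype.card_fin] at h
    have hfib : ∀ j : Fin m, ((Finset.univ.erase (0 : Fin (m*(m-1)+1))).filter
        (fun i => s i = j)) = U s j := by
      intro j
      ext i
      simp only [Finset.mem_filter, Finset.mem_erase, Finset.mem_univ, true_and,
        and_true, U]
    rw [Finset.sum_congr rfl (fun j _ => by rw [hfib j])] at h
    omega
  have ha : (U s (s 0)).card = m - 1 := by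
    apply arith_a hm
    · calc m * (U s (s 0)).card = ∑ _j : Fin m, (U s (s 0)).card := by
            rw [Finset.sum_const, Finset.card_univ, Fintype.card_fin, smul_eq_mul]
      _ ≤ ∑ j : Fin m, (U s j).card := Finset.sum_le_sum (fun j _ => hA j)
      _ = m*(m-1) := hsum
    · have h1 : ∑ j : Fin m, (U s j).card
          = (U s (s 0)).card + ∑ j ∈ Finset.univ.erase (s 0), (U s j).card :=
        (Finset.add_sum_erase _ _ (Finset.mem_univ (s 0))).symm
      have h2 : ∑ j ∈ Finset.univ.erase (s 0), (U s j).card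
          ≤ (Finset.univ.erase (s 0)).card * ((U s (s 0)).card + 1) := by
        have := Finset.sum_le_card_nsmul (Finset.univ.erase (s 0))
          (fun j => (U s j).card) ((U s (s 0)).card + 1) (fun j _ => hB j)
        simpa [smul_eq_mul] using this
      rw [Finset.card_erase_of_mem (Finset.mem_univ _), Finset.card_univ,
        Fintype.card_fin] at h2
      calc m*(m-1) = ∑ j : Fin m, (U s j).card := hsum.symm
        _ = (U s (s 0)).card + ∑ j ∈ Finset.univ.erase (s 0), (U s j).card := h1
        _ ≤ (U s (s 0)).card + (m-1) * ((U s (s 0)).card + 1) :=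
            Nat.add_le_add_left h2 _
  have hge' : ∀ j', m - 1 ≤ (U s j').card := by
    intro j'
    have h := hA j'
    omega
  have hall : ∀ j, (U s j).card = m - 1 := by
    intro j
    by_contra hne
    have hlt : m - 1 < (U s j).card := lt_of_le_of_ne (hge' j) (Ne.symm hne)
    have h1 : ∑ j' : Fin m, (U s j').card
        = (U s j).card + ∑ j' ∈ Finset.univ.erase j, (U s j').card :=
      (Finset.add_sum_erase _ _ (Finset.mem_univ j)).symm
    have h2 : (Finset.univ.erase j).card * (m-1)
        ≤ ∑ j' ∈ Finset.univ.erase j, (U s j').card := by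
      have := Finset.card_nsmul_le_sum (Finset.univ.erase j)
        (fun j' => (U s j').card) (m-1) (fun j' _ => hge' j')
      simpa [smul_eq_mul] using this
    rw [Finset.card_erase_of_mem (Finset.mem_univ _), Finset.card_univ,
      Fintype.card_fin] at h2
    exact arith_b hm hlt (hsum.symm.trans h1) h2
  have hcast1 : ((m - 1 : ℕ) : ℝ) = (m:ℝ) - 1 := by
    push_cast [Nat.cast_sub (by omega : 1 ≤ m)]
    ring
  have hcost0 : schedCost (wt m (m*(m-1))) (cc m) π s 0 = 2*(m:ℝ) - 1 := by
    rw [cost_heavy_eq π hlast s, hall (s 0), hcast1]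
    ring
  apply le_antisymm
  · rw [makespan]
    apply ciSup_le
    intro i
    by_cases hi : i = 0
    · subst hi
      exact le_of_eq hcost0
    · have h1 := cost_unit_le π hlast s i hi
      have hm2 : (2:ℝ) ≤ (m:ℝ) := by exact_mod_cast (by omega : 2 ≤ m)
      calc schedCost (wt m (m*(m-1))) (cc m) π s i ≤ ((U s (s i)).card : ℝ) := h1
        _ = (m:ℝ) - 1 := by rw [hall (s i), hcast1]
        _ ≤ 2*(m:ℝ) - 1 := by linarith
  · rw [← hcost0]
    exact le_makespan π s 0

include hm hlast in
lemma makespan_topt : makespan (wt m (m*(m-1))) (cc m) π (topt hm) = (m:ℝ) := by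
  apply le_antisymm
  · rw [makespan]
    apply ciSup_le
    intro i
    by_cases hi : i = 0
    · subst hi
      rw [cost_heavy_eq π hlast]
      have hU : U (topt hm) (topt hm 0) = ∅ := by
        ext i'
        simp only [U, Finset.mem_filter, Finset.mem_univ, true_and,
          Finset.notMem_empty, iff_false, not_and]
        intro hi' hcon
        have hv := congrArg Fin.val hcon
        rw [topt_ne_zero hm hi', topt_zero hm] at hv
        simp [Nat.add_eq_zero] at hv
      rw [hU]
      simp
    · have h1 := cost_unit_le π hlast (topt hm) i hi
      have h2 : (U (topt hm) (topt hm i)).card ≤ m := by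
        have h := Finset.card_le_card_of_injOn
          (s := U (topt hm) (topt hm i)) (t := (Finset.univ : Finset (Fin m)))
          (fun i' => (⟨(i'.val - 1) % m, Nat.mod_lt _ (by omega : 0 < m)⟩ : Fin m))
          (fun _ _ => Finset.mem_univ _) ?_
        · rwa [Finset.card_univ, Fintype.card_fin] at h
        · intro i1 h1' i2 h2' heq
          simp only [Finset.coe_filter, Set.mem_setOf_eq, U, Finset.mem_coe,
            Finset.mem_filter] at h1' h2'
          obtain ⟨-, h10, h1t⟩ := h1'
          obtain ⟨-, h20, h2t⟩ := h2'
          have hv1 : (topt hm i1).val = 1 + (i1.val - 1)/m := topt_ne_zero hm h10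
          have hv2 : (topt hm i2).val = 1 + (i2.val - 1)/m := topt_ne_zero hm h20
          have hdiv : (i1.val - 1)/m = (i2.val - 1)/m := by
            have := congrArg Fin.val (h1t.trans h2t.symm)
            rw [hv1, hv2] at this
            omega
          have hmod : (i1.val - 1) % m = (i2.val - 1) % m := by
            have := congrArg Fin.val heq
            simpa using this
          have hne1 : i1.val ≠ 0 := fun h => h10 (Fin.ext h)
          have hne2 : i2.val ≠ 0 := fun h => h20 (Fin.ext h)
          have e1 := Nat.div_add_mod (i1.val - 1) m
          have e2 := Nat.div_add_mod (i2.val - 1) m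
          have : i1.val - 1 = i2.val - 1 := by
            rw [← e1, ← e2, hdiv, hmod]
          exact Fin.ext (by omega)
      have hm' : ((m:ℕ):ℝ) = (m:ℝ) := rfl
      calc schedCost (wt m (m*(m-1))) (cc m) π (topt hm) i
          ≤ ((U (topt hm) (topt hm i)).card : ℝ) := h1
        _ ≤ (m:ℝ) := by exact_mod_cast h2
  · exact m_le_makespan' hm π hlast (topt hm)

end Parts

end Stmt11Aux

/-- For every m ≥ 2: the game on m identical machines with one heavy job of weight m
(job 0) and m(m-1) unit jobs, where every priority list puts the heavy job last,
has an NE; every NE has makespan 2m-1; and the optimal makespan is exactly m.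
Hence the PoS w.r.t. makespan is 2 - 1/m. -/
theorem stmt11 (m : ℕ) (hm : 2 ≤ m)
    (π : Fin m → Fin (m * (m - 1) + 1) → Fin (m * (m - 1) + 1))
    (hπ : ∀ j, Function.Bijective (π j))
    (hlast : ∀ j i, i ≠ 0 → π j i < π j 0) :
    (∃ s, schedNE (fun i => if i = 0 then (m:ℝ) else 1) (fun _ : Fin m => (1:ℝ)) π s) ∧
    (∀ s, schedNE (fun i => if i = 0 then (m:ℝ) else 1) (fun _ : Fin m => (1:ℝ)) π s →
      makespan (fun i => if i = 0 then (m:ℝ) else 1) (fun _ : Fin m => (1:ℝ)) π s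
        = 2 * (m:ℝ) - 1) ∧
    (∃ t, makespan (fun i => if i = 0 then (m:ℝ) else 1) (fun _ : Fin m => (1:ℝ)) π t
        = (m:ℝ)) ∧
    (∀ t, (m:ℝ) ≤
      makespan (fun i => if i = 0 then (m:ℝ) else 1) (fun _ : Fin m => (1:ℝ)) π t) := by
  have hm0 : 0 < m := by omega
  exact ⟨⟨Stmt11Aux.sNE π hm0, Stmt11Aux.greedy_NE π hm0 hπ hlast⟩,
    fun s hs => Stmt11Aux.NE_makespan hm π hπ hlast s hs,
    ⟨Stmt11Aux.topt hm, Stmt11Aux.makespan_topt hm π hlast⟩,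
    fun t => Stmt11Aux.m_le_makespan' hm π hlast t⟩
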